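/- arXiv:1306.4197 — 3 statements merged into one kernel-verified Lean document; each statement's English description precedes it below -/
import Mathlib

section
/- For each m ∈ ℕ, let P_m be the order-m Taylor expansion operator on smooth functions of n real variables: (P_m f)(v) = ∑_{|β| ≤ m} (v^β/β!) ∂^β f(0). Then for all s, t ∈ ℕ and smooth polynomial-extendable f, g, one has (P_s f)(P_t g) = P_{s+t}[(P_s f)g + f(P_t g) − fg]. -/
/- STATEMENT 2: The order-`m` Taylor expansion operators `P_m` (here: truncation of a
multivariate formal power series to total degree ≤ m) form a Rota–Baxter family:
`(P_s f)(P_t g) = P_{s+t}[(P_s f)g + f(P_t g) − fg]`. -/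

variable {n : ℕ} {R : Type*} [CommRing R]

/-- Truncation of a multivariate power series to total degree at most `m`
(the order-`m` Taylor expansion operator). -/
noncomputable def taylorTrunc (m : ℕ) (f : MvPowerSeries (Fin n) R) :
    MvPowerSeries (Fin n) R :=
  fun d => if (d.sum fun _ k => k) ≤ m then f d else 0

lemma taylorTrunc_coeff (m : ℕ) (f : MvPowerSeries (Fin n) R) (d : Fin n →₀ ℕ) :
    MvPowerSeries.coeff d (taylorTrunc m f) =
      if (d.sum fun _ k => k) ≤ m then MvPowerSeries.coeff d f else 0 := rfl

theorem taylorTrunc_rotaBaxterFamily (s t : ℕ) (f g : MvPowerSeries (Fin n) R) :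
    taylorTrunc s f * taylorTrunc t g =
      taylorTrunc (s + t)
        (taylorTrunc s f * g + f * taylorTrunc t g - f * g) := by
  ext d
  rw [MvPowerSeries.coeff_mul, taylorTrunc_coeff]
  by_cases hd : (d.sum fun _ k => k) ≤ s + t
  · rw [if_pos hd, map_sub, map_add, MvPowerSeries.coeff_mul, MvPowerSeries.coeff_mul,
      MvPowerSeries.coeff_mul, ← Finset.sum_add_distrib, ← Finset.sum_sub_distrib]
    apply Finset.sum_congr rfl
    intro p hp
    rw [Finset.HasAntidiagonal.mem_antidiagonal] at hp
    have hsum : (p.1.sum fun _ k => k) + (p.2.sum fun _ k => k) = d.sum fun _ k => k := by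
      rw [← hp, Finsupp.sum_add_index] <;> simp
    rw [taylorTrunc_coeff, taylorTrunc_coeff]
    by_cases h1 : (p.1.sum fun _ k => k) ≤ s <;>
      by_cases h2 : (p.2.sum fun _ k => k) ≤ t
    · simp [h1, h2]
    · simp [h1, h2]
    · simp [h1, h2]
    · omega
  · rw [if_neg hd]
    apply Finset.sum_eq_zero
    intro p hp
    rw [Finset.HasAntidiagonal.mem_antidiagonal] at hp
    have hsum : (p.1.sum fun _ k => k) + (p.2.sum fun _ k => k) = d.sum fun _ k => k := by
      rw [← hp, Finsupp.sum_add_index] <;> simp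
    rw [taylorTrunc_coeff, taylorTrunc_coeff]
    by_cases h1 : (p.1.sum fun _ k => k) ≤ s <;>
      by_cases h2 : (p.2.sum fun _ k => k) ≤ t
    · omega
    all_goals simp [h1, h2]
end

section
/- Let H be a graded connected bialgebra over a field, A a commutative unital algebra, and P : A → A an idempotent linear operator satisfying the Rota–Baxter identity P(a)P(b) = P(P(a)b + aP(b) − ab), with both im(P) and ker(P) subalgebras. Then every algebra morphism (character) φ : H → A admits a Birkhoff decomposition φ = φ_-^{*-1} * φ_+ with φ_-(x) ∈ im(P) for all x of positive degree and φ_+(x) ∈ ker(P) for all x, where φ_- and φ_+ are defined recursively by φ_-(x) = −P(φ(x) + ∑ φ_-(x')φ(x'')) and φ_+(x) = (Id − P)(φ(x) + ∑ φ_-(x')φ(x'')), the sums running over the reduced coproduct Δ̃(x) = ∑ x' ⊗ x''. -/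
variable {R H A : Type*} [Field R] [Ring H] [Bialgebra R H]
  [CommRing A] [Algebra R A]

noncomputable def conv (f g : H →ₗ[R] A) : H →ₗ[R] A :=
  (LinearMap.mul' R A).comp ((TensorProduct.map f g).comp
    (Coalgebra.comul : H →ₗ[R] TensorProduct R H H))

noncomputable def convUnit : H →ₗ[R] A :=
  (Algebra.linearMap R A).comp (Coalgebra.counit : H →ₗ[R] R)

def IsCharacter (f : H →ₗ[R] A) : Prop :=
  f 1 = 1 ∧ ∀ x y : H, f (x * y) = f x * f y

def Connected (ℬ : ℕ → Submodule R H) : Prop :=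
  ℬ 0 ≤ Submodule.span R {(1 : H)}

def ComulGraded (ℬ : ℕ → Submodule R H) : Prop :=
  ∀ n : ℕ, ∀ x ∈ ℬ n, (Coalgebra.comul (R := R) x : TensorProduct R H H) ∈
    ⨆ (p : ℕ × ℕ) (_ : p.1 + p.2 = n),
      LinearMap.range (TensorProduct.map (ℬ p.1).subtype (ℬ p.2).subtype)

section Aux

open Coalgebra

lemma conv_apply_repr (f g : H →ₗ[R] A) {x : H} {ι : Type*} (repr : Coalgebra.Repr R x ι) :
    conv f g x = ∑ i ∈ repr.index, f (repr.left i) * g (repr.right i) := by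
  simp only [conv, LinearMap.comp_apply, ← repr.eq, map_sum, TensorProduct.map_tmul,
    LinearMap.mul'_apply]

lemma conv_one_apply (f g : H →ₗ[R] A) : conv f g 1 = f 1 * g 1 := by
  simp [conv, Bialgebra.comul_one, Algebra.TensorProduct.one_def, LinearMap.mul'_apply]

lemma conv_convUnit (f : H →ₗ[R] A) : conv f convUnit = f := by
  ext x
  have repr := Coalgebra.Repr.arbitrary R x
  have h := congrArg (TensorProduct.rid R H) (Coalgebra.sum_tmul_counit_eq repr)
  simp only [map_sum, TensorProduct.rid_tmul, one_smul, LinearEquiv.coe_coe] at h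
  rw [conv_apply_repr f convUnit repr]
  calc ∑ i ∈ repr.index, f (repr.left i) * convUnit (repr.right i)
      = ∑ i ∈ repr.index, counit (R := R) (repr.right i) • f (repr.left i) := by
        refine Finset.sum_congr rfl fun i _ => ?_
        simp [convUnit, Algebra.smul_def, mul_comm]
    _ = f x := by
        conv_rhs => rw [← h]
        simp [map_sum]

lemma convUnit_conv (f : H →ₗ[R] A) : conv convUnit f = f := by
  ext x
  have repr := Coalgebra.Repr.arbitrary R x
  have h := congrArg (TensorProduct.lid R H) (Coalgebra.sum_counit_tmul_eq repr)
  simp only [map_sum, TensorProduct.lid_tmul, one_smul, LinearEquiv.coe_coe] at h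
  rw [conv_apply_repr convUnit f repr]
  calc ∑ i ∈ repr.index, convUnit (repr.left i) * f (repr.right i)
      = ∑ i ∈ repr.index, counit (R := R) (repr.left i) • f (repr.right i) := by
        refine Finset.sum_congr rfl fun i _ => ?_
        simp [convUnit, Algebra.smul_def]
    _ = f x := by
        conv_rhs => rw [← h]
        simp [map_sum]

lemma conv_assoc (f g h : H →ₗ[R] A) : conv (conv f g) h = conv f (conv g h) := by
  ext x
  set repr := Coalgebra.Repr.arbitrary R x with hrepr
  set a₁ : (i : repr.ι) → Coalgebra.Repr R (repr.left i) (H × H) :=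
    fun i => Coalgebra.Repr.arbitrary R (repr.left i) with ha₁
  set a₂ : (i : repr.ι) → Coalgebra.Repr R (repr.right i) (H × H) :=
    fun i => Coalgebra.Repr.arbitrary R (repr.right i) with ha₂
  have key := Coalgebra.sum_map_tmul_tmul_eq f g h x (repr := repr) (a₁ := a₁) (a₂ := a₂)
  have key2 := congrArg (LinearMap.mul' R A ∘ₗ (LinearMap.mul' R A).lTensor A) key
  simp only [map_sum, LinearMap.comp_apply, LinearMap.lTensor_tmul,
    LinearMap.mul'_apply] at key2
  calc conv (conv f g) h x
      = ∑ i ∈ repr.index, conv f g (repr.left i) * h (repr.right i) :=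
        conv_apply_repr _ _ repr
    _ = ∑ i ∈ repr.index, ∑ j ∈ (a₁ i).index,
          f ((a₁ i).left j) * (g ((a₁ i).right j) * h (repr.right i)) := by
        refine Finset.sum_congr rfl fun i _ => ?_
        rw [conv_apply_repr f g (a₁ i), Finset.sum_mul]
        simp [mul_assoc]
    _ = ∑ i ∈ repr.index, ∑ j ∈ (a₂ i).index,
          f (repr.left i) * (g ((a₂ i).left j) * h ((a₂ i).right j)) := key2.symm
    _ = ∑ i ∈ repr.index, f (repr.left i) * conv g h (repr.right i) := by
        refine Finset.sum_congr rfl fun i _ => ?_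
        rw [conv_apply_repr g h (a₂ i), Finset.mul_sum]
    _ = conv f (conv g h) x := (conv_apply_repr _ _ repr).symm

lemma conv_add_left (f g h : H →ₗ[R] A) : conv (f + g) h = conv f h + conv g h := by
  ext x
  have repr := Coalgebra.Repr.arbitrary R x
  simp [conv_apply_repr _ _ repr, add_mul, Finset.sum_add_distrib]

lemma conv_sub_right (f g h : H →ₗ[R] A) : conv f (g - h) = conv f g - conv f h := by
  ext x
  have repr := Coalgebra.Repr.arbitrary R x
  simp only [LinearMap.sub_apply, conv_apply_repr _ _ repr]
  simp [mul_sub, Finset.sum_sub_distrib]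

lemma conv_zero_right (f : H →ₗ[R] A) : conv f (0 : H →ₗ[R] A) = 0 := by
  ext x
  have repr := Coalgebra.Repr.arbitrary R x
  simp [conv_apply_repr _ _ repr]

variable (ℬ : ℕ → Submodule R H) [GradedAlgebra ℬ]

lemma hom_ext_homog {f g : H →ₗ[R] A} (h : ∀ n, ∀ x ∈ ℬ n, f x = g x) : f = g := by
  ext x
  refine DirectSum.Decomposition.inductionOn ℬ (motive := fun m => f m = g m) (by simp) ?_ ?_ x
  · rintro i ⟨m, hm⟩; exact h i m hm
  · intro a b ha hb; rw [map_add, map_add, ha, hb]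

lemma conv_right_congr (hgr : ComulGraded ℬ) (σ : H →ₗ[R] A) (hσ : ∀ x ∈ ℬ 0, σ x = 0)
    {n : ℕ} {g₁ g₂ : H →ₗ[R] A} (hlow : ∀ p, p < n → ∀ x ∈ ℬ p, g₁ x = g₂ x)
    {x : H} (hx : x ∈ ℬ n) : conv g₁ σ x = conv g₂ σ x := by
  have key : (⨆ (p : ℕ × ℕ) (_ : p.1 + p.2 = n),
      LinearMap.range (TensorProduct.map (ℬ p.1).subtype (ℬ p.2).subtype)) ≤
      LinearMap.ker ((LinearMap.mul' R A ∘ₗ TensorProduct.map g₁ σ) -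
        (LinearMap.mul' R A ∘ₗ TensorProduct.map g₂ σ)) := by
    refine iSup₂_le fun p hp => ?_
    rw [LinearMap.range_le_ker_iff]
    apply TensorProduct.ext'
    rintro ⟨a, ha⟩ ⟨b, hb⟩
    simp only [LinearMap.comp_apply, TensorProduct.map_tmul, Submodule.coe_subtype,
      LinearMap.sub_apply, LinearMap.zero_apply, LinearMap.mul'_apply]
    rcases Nat.eq_zero_or_pos p.2 with h2 | h2
    · rw [hσ b (h2 ▸ hb)]; ring
    · rw [hlow p.1 (by omega) a ha]; ring
  have hk := key (hgr n x hx)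
  rw [LinearMap.mem_ker, LinearMap.sub_apply, sub_eq_zero] at hk
  simpa [conv] using hk

lemma conv_left_congr (hgr : ComulGraded ℬ) (σ : H →ₗ[R] A) (hσ : ∀ x ∈ ℬ 0, σ x = 0)
    {n : ℕ} {g₁ g₂ : H →ₗ[R] A} (hlow : ∀ p, p < n → ∀ x ∈ ℬ p, g₁ x = g₂ x)
    {x : H} (hx : x ∈ ℬ n) : conv σ g₁ x = conv σ g₂ x := by
  have key : (⨆ (p : ℕ × ℕ) (_ : p.1 + p.2 = n),
      LinearMap.range (TensorProduct.map (ℬ p.1).subtype (ℬ p.2).subtype)) ≤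
      LinearMap.ker ((LinearMap.mul' R A ∘ₗ TensorProduct.map σ g₁) -
        (LinearMap.mul' R A ∘ₗ TensorProduct.map σ g₂)) := by
    refine iSup₂_le fun p hp => ?_
    rw [LinearMap.range_le_ker_iff]
    apply TensorProduct.ext'
    rintro ⟨a, ha⟩ ⟨b, hb⟩
    simp only [LinearMap.comp_apply, TensorProduct.map_tmul, Submodule.coe_subtype,
      LinearMap.sub_apply, LinearMap.zero_apply, LinearMap.mul'_apply]
    rcases Nat.eq_zero_or_pos p.1 with h1 | h1
    · rw [hσ a (h1 ▸ ha)]; ring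
    · rw [hlow p.2 (by omega) b hb]; ring
  have hk := key (hgr n x hx)
  rw [LinearMap.mem_ker, LinearMap.sub_apply, sub_eq_zero] at hk
  simpa [conv] using hk

lemma fixpoint (F : (H →ₗ[R] A) → (H →ₗ[R] A))
    (hF : ∀ (n : ℕ) (g₁ g₂ : H →ₗ[R] A), (∀ p, p < n → ∀ x ∈ ℬ p, g₁ x = g₂ x) →
      ∀ x ∈ ℬ n, F g₁ x = F g₂ x) :
    ∃ g : H →ₗ[R] A, g = F g := by
  have stab : ∀ n, ∀ k₁ k₂ : ℕ, n < k₁ → n < k₂ → ∀ x ∈ ℬ n, F^[k₁] 0 x = F^[k₂] 0 x := by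
    intro n
    induction n using Nat.strong_induction_on with
    | _ n ih =>
      intro k₁ k₂ h1 h2 x hx
      obtain ⟨m₁, rfl⟩ : ∃ m, k₁ = m + 1 := ⟨k₁ - 1, by omega⟩
      obtain ⟨m₂, rfl⟩ : ∃ m, k₂ = m + 1 := ⟨k₂ - 1, by omega⟩
      rw [Function.iterate_succ_apply', Function.iterate_succ_apply']
      exact hF n _ _ (fun p hp y hy => ih p hp m₁ m₂ (by omega) (by omega) y hy) x hx
  set g : H →ₗ[R] A :=
    (DirectSum.toModule R ℕ A fun n => (F^[n + 1] 0) ∘ₗ (ℬ n).subtype) ∘ₗ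
      (DirectSum.decomposeLinearEquiv ℬ).toLinearMap with hg
  have hcomp : ∀ n, ∀ x ∈ ℬ n, g x = F^[n + 1] 0 x := by
    intro n x hx
    rw [hg]
    simp only [LinearMap.comp_apply, LinearEquiv.coe_coe, DirectSum.decomposeLinearEquiv_apply,
      DirectSum.decompose_of_mem ℬ hx, ← DirectSum.lof_eq_of R, DirectSum.toModule_lof]
    rfl
  refine ⟨g, hom_ext_homog ℬ fun n x hx => ?_⟩
  have h2 : F g x = F (F^[n] 0) x := by
    refine hF n g (F^[n] 0) (fun p hp y hy => ?_) x hx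
    rw [hcomp p y hy]
    exact stab p (p + 1) n (lt_add_one p) hp y hy
  rw [hcomp n x hx,
    show F^[n + 1] (0 : H →ₗ[R] A) = F (F^[n] 0) from Function.iterate_succ_apply' F n 0, h2]

set_option synthInstance.maxHeartbeats 400000 in
noncomputable def proj0 : H →ₗ[R] H where
  toFun x := (DirectSum.decompose ℬ x 0 : H)
  map_add' x y := by simp
  map_smul' c x := by
    simp [DirectSum.decompose_smul, DirectSum.smul_apply]

lemma proj0_of_mem_same {x : H} (hx : x ∈ ℬ 0) : proj0 ℬ x = x := by
  simp [proj0, DirectSum.decompose_of_mem_same ℬ hx]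

lemma proj0_of_mem_ne {n : ℕ} (hn : 0 < n) {x : H} (hx : x ∈ ℬ n) : proj0 ℬ x = 0 := by
  simp [proj0, DirectSum.decompose_of_mem_ne ℬ hx (by omega : n ≠ 0)]

end Aux

theorem birkhoff_decomposition_exists
    (ℬ : ℕ → Submodule R H) [GradedAlgebra ℬ]
    (hconn : Connected ℬ) (hgr : ComulGraded ℬ)
    (P : A →ₗ[R] A)
    (hidem : P.comp P = P)
    (hRB : ∀ a b : A, P a * P b = P (P a * b + a * P b - a * b))
    (himage : ∀ a b : A, a ∈ LinearMap.range P → b ∈ LinearMap.range P →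
      a * b ∈ LinearMap.range P)
    (hker : ∀ a b : A, a ∈ LinearMap.ker P → b ∈ LinearMap.ker P →
      a * b ∈ LinearMap.ker P)
    (hker1 : (1 : A) ∈ LinearMap.ker P)
    (φ : H →ₗ[R] A) (hφ : IsCharacter φ) :
    ∃ φm φp φmi : H →ₗ[R] A,
      -- φ₋^{*-1} exists and φ = φ₋^{*-1} * φ₊
      conv φm φmi = convUnit ∧ conv φmi φm = convUnit ∧
      φ = conv φmi φp ∧
      -- equivalently φ₊ = φ₋ * φ
      φp = conv φm φ ∧
      φm 1 = 1 ∧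
      -- the recursive formulas φ₋ = −P(φ̄), φ₊ = (Id − P)(φ̄)
      (∀ n : ℕ, 0 < n → ∀ x ∈ ℬ n,
        φm x = - P ((conv φm φ) x - φm x)) ∧
      (∀ n : ℕ, 0 < n → ∀ x ∈ ℬ n,
        φp x = ((conv φm φ) x - φm x) - P ((conv φm φ) x - φm x)) ∧
      -- values of the two components
      (∀ n : ℕ, 0 < n → ∀ x ∈ ℬ n, φm x ∈ LinearMap.range P) ∧
      (∀ x : H, φp x ∈ LinearMap.ker P) := by
  have hone : (1 : H) ∈ ℬ 0 := SetLike.one_mem_graded ℬ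
  have hunit1 : (convUnit : H →ₗ[R] A) 1 = 1 := by
    simp [convUnit, Bialgebra.counit_one]
  have hmem0 : ∀ x ∈ ℬ 0, ∃ c : R, x = c • 1 := by
    intro x hx
    obtain ⟨c, hc⟩ := Submodule.mem_span_singleton.mp (hconn hx)
    exact ⟨c, hc.symm⟩
  -- ψ = φ - e vanishes on degree 0
  set ψ : H →ₗ[R] A := φ - convUnit with hψ
  have hψ0 : ∀ x ∈ ℬ 0, ψ x = 0 := by
    intro x hx
    obtain ⟨c, rfl⟩ := hmem0 x hx
    simp [hψ, hφ.1, hunit1]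
  -- the recursion operator for φm
  set e₀ : H →ₗ[R] A := convUnit ∘ₗ proj0 ℬ with he₀
  set F₁ : (H →ₗ[R] A) → (H →ₗ[R] A) := fun g => e₀ - P ∘ₗ conv g ψ with hF₁def
  obtain ⟨φm, hfix⟩ := fixpoint ℬ F₁ (by
    intro n g₁ g₂ hlow x hx
    simp only [hF₁def, LinearMap.sub_apply, LinearMap.comp_apply]
    rw [conv_right_congr ℬ hgr ψ hψ0 hlow hx])
  have hφm_apply : ∀ x : H, φm x = e₀ x - P (conv φm ψ x) := by
    intro x; conv_lhs => rw [hfix]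
    rfl
  have hφm1 : φm 1 = 1 := by
    rw [hφm_apply 1, conv_one_apply, hψ0 1 hone]
    simp [he₀, proj0_of_mem_same ℬ hone, hunit1]
  have hy : ∀ x : H, conv φm ψ x = conv φm φ x - φm x := by
    intro x
    have : conv φm ψ = conv φm φ - conv φm convUnit := conv_sub_right φm φ convUnit
    rw [this, conv_convUnit]
    rfl
  have hrec : ∀ n : ℕ, 0 < n → ∀ x ∈ ℬ n, φm x = - P ((conv φm φ) x - φm x) := by
    intro n hn x hx
    have he0x : e₀ x = 0 := by simp [he₀, proj0_of_mem_ne ℬ hn hx]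
    conv_lhs => rw [hφm_apply x, hy x, he0x]
    rw [zero_sub]
  -- σ = φm - e vanishes on degree 0
  set σ : H →ₗ[R] A := φm - convUnit with hσdef
  have hσ0 : ∀ x ∈ ℬ 0, σ x = 0 := by
    intro x hx
    obtain ⟨c, rfl⟩ := hmem0 x hx
    simp [hσdef, hφm1, hunit1]
  have hφm_eq : φm = convUnit + σ := by rw [hσdef]; abel
  -- right inverse
  obtain ⟨r, hrfix⟩ := fixpoint ℬ (fun h => convUnit - conv σ h) (by
    intro n g₁ g₂ hlow x hx
    simp only [LinearMap.sub_apply]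
    rw [conv_left_congr ℬ hgr σ hσ0 hlow hx])
  have hr : conv φm r = convUnit := by
    have hcr : conv σ r = convUnit - r := by
      conv_rhs => rw [hrfix]
      abel
    rw [hφm_eq, conv_add_left, convUnit_conv, hcr]
    abel
  -- left inverse
  obtain ⟨l, hlfix⟩ := fixpoint ℬ (fun h => convUnit - conv h σ) (by
    intro n g₁ g₂ hlow x hx
    simp only [LinearMap.sub_apply]
    rw [conv_right_congr ℬ hgr σ hσ0 hlow hx])
  have hl : conv l φm = convUnit := by
    have hcl : conv l σ = convUnit - l := by
      conv_rhs => rw [hlfix]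
      abel
    have : conv l (convUnit + σ) = conv l convUnit + conv l σ := by
      have h2 : convUnit + σ = convUnit - (0 - σ) := by abel
      rw [h2, conv_sub_right, conv_sub_right]
      simp [conv_zero_right]
    rw [hφm_eq, this, conv_convUnit, hcl]
    abel
  have hlr : l = r := by
    calc l = conv l convUnit := (conv_convUnit l).symm
      _ = conv l (conv φm r) := by rw [hr]
      _ = conv (conv l φm) r := (conv_assoc l φm r).symm
      _ = conv convUnit r := by rw [hl]
      _ = r := convUnit_conv r
  have hPP : ∀ a : A, P (P a) = P a := fun a => DFunLike.congr_fun hidem a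
  have hP1 : P (1 : A) = 0 := LinearMap.mem_ker.mp hker1
  refine ⟨φm, conv φm φ, l, ?_, hl, ?_, rfl, hφm1, hrec, ?_, ?_, ?_⟩
  · rw [hlr]; exact hr
  · rw [← conv_assoc, hl, convUnit_conv]
  · intro n hn x hx
    have h6 := hrec n hn x hx
    linear_combination h6
  · intro n hn x hx
    refine ⟨-((conv φm φ) x - φm x), ?_⟩
    rw [map_neg]
    exact (hrec n hn x hx).symm
  · -- φp valued in ker P
    have hkp : ∀ n, ∀ x ∈ ℬ n, P (conv φm φ x) = 0 := by
      intro n x hx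
      rcases Nat.eq_zero_or_pos n with hn | hn
      · obtain ⟨c, rfl⟩ := hmem0 x (hn ▸ hx)
        rw [map_smul, map_smul, conv_one_apply, hφm1, hφ.1, one_mul, hP1, smul_zero]
      · have h6 := hrec n hn x hx
        have hxeq : conv φm φ x = ((conv φm φ) x - φm x) - P ((conv φm φ) x - φm x) := by
          linear_combination h6
        rw [hxeq, map_sub, hPP, sub_self]
    intro x
    rw [LinearMap.mem_ker]
    refine DirectSum.Decomposition.inductionOn ℬ
      (motive := fun m => P ((conv φm φ) m) = 0) (by simp) ?_ ?_ x
    · rintro i ⟨m, hm⟩; exact hkp i m hm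
    · intro a b ha hb; rw [map_add, map_add, ha, hb, add_zero]
end

section
/- Let Γ be a finite graph and δ a covering subgraph of Γ. There is a bijection between covering subgraphs γ of Γ containing δ and covering subgraphs γ̃ of the contracted graph Γ/δ, given by γ ↦ γ/δ; moreover under this bijection (Γ/δ)/(γ/δ) is canonically isomorphic to Γ/γ. -/
/- STATEMENT 13: For a covering subgraph `δ` of `Γ`, the map `γ ↦ γ/δ` is a bijection
between covering subgraphs of `Γ` containing `δ` and covering subgraphs of `Γ/δ`,
and `(Γ/δ)/(γ/δ)` is canonically isomorphic to `Γ/γ`. -/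

structure FinGraph where
  V : Type
  E : Type
  [fintypeV : Fintype V]
  [fintypeE : Fintype E]
  ends : E → V × V

attribute [instance] FinGraph.fintypeV FinGraph.fintypeE

namespace FinGraph

def adj (G : FinGraph) (v w : G.V) : Prop :=
  ∃ e : G.E, G.ends e = (v, w) ∨ G.ends e = (w, v)

def components (G : FinGraph) : Type := Quot G.adj

noncomputable def subgraph (G : FinGraph) (S : Set G.E) : FinGraph :=
  { V := G.V
    E := ↥S
    fintypeV := G.fintypeV
    fintypeE := (Set.toFinite S).fintype
    ends := fun e => G.ends e.1 }

noncomputable def contract (G : FinGraph) (S : Set G.E) : FinGraph :=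
  { V := (G.subgraph S).components
    E := ↥(Sᶜ)
    fintypeV := by
      classical
      have : Finite (G.subgraph S).components := Quot.finite _
      exact Fintype.ofFinite _
    fintypeE := (Set.toFinite Sᶜ).fintype
    ends := fun e =>
      (Quot.mk (G.subgraph S).adj (G.ends e.1).1,
       Quot.mk (G.subgraph S).adj (G.ends e.1).2) }

/-- An isomorphism of finite graphs. -/
structure GraphIso (G G' : FinGraph) where
  vEquiv : G.V ≃ G'.V
  eEquiv : G.E ≃ G'.E
  ends_comm : ∀ e : G.E,
    G'.ends (eEquiv e) = (vEquiv (G.ends e).1, vEquiv (G.ends e).2)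


section Aux

variable (G : FinGraph) (D S : Set G.E)

/-- Edge set of the intermediate contraction. -/
def tset : Set (G.contract D).E := {e : ↥(Dᶜ) | (e : G.E) ∈ S}

noncomputable def fmap (h : D ⊆ S) :
    (G.subgraph D).components → (G.subgraph S).components :=
  Quot.lift (Quot.mk (G.subgraph S).adj) (by
    rintro v w ⟨e, he⟩
    exact Quot.sound ⟨⟨e.1, h e.2⟩, he⟩)

noncomputable def gmap (h : D ⊆ S) :
    ((G.contract D).subgraph (G.tset D S)).components → (G.subgraph S).components :=
  Quot.lift (G.fmap D S h) (by
    rintro q q' ⟨e, he⟩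
    have hrel : (G.subgraph S).adj (G.ends e.1.1).1 (G.ends e.1.1).2 :=
      ⟨⟨e.1.1, e.2⟩, Or.inl rfl⟩
    have key : G.fmap D S h (Quot.mk _ (G.ends e.1.1).1)
        = G.fmap D S h (Quot.mk _ (G.ends e.1.1).2) := Quot.sound hrel
    rcases he with he | he
    · have h1 : Quot.mk (G.subgraph D).adj (G.ends e.1.1).1 = q := congrArg Prod.fst he
      have h2 : Quot.mk (G.subgraph D).adj (G.ends e.1.1).2 = q' := congrArg Prod.snd he
      rw [← h1, ← h2]; exact key
    · have h1 : Quot.mk (G.subgraph D).adj (G.ends e.1.1).1 = q' := congrArg Prod.fst he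
      have h2 : Quot.mk (G.subgraph D).adj (G.ends e.1.1).2 = q := congrArg Prod.snd he
      rw [← h1, ← h2]; exact key.symm)

noncomputable def hmap (h : D ⊆ S) :
    (G.subgraph S).components → ((G.contract D).subgraph (G.tset D S)).components :=
  Quot.lift
    (fun v => Quot.mk _ (Quot.mk (G.subgraph D).adj v)) (by
    rintro v w ⟨e, he⟩
    by_cases hD : e.1 ∈ D
    · exact congrArg (Quot.mk _) (Quot.sound ⟨⟨e.1, hD⟩, he⟩)
    · apply Quot.sound
      refine ⟨⟨(⟨e.1, hD⟩ : ↥(Dᶜ)), e.2⟩, ?_⟩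
      rcases he with he | he
      · exact Or.inl (by
          show (Quot.mk (G.subgraph D).adj (G.ends e.1).1,
                Quot.mk (G.subgraph D).adj (G.ends e.1).2) = _
          rw [show G.ends e.1 = (v, w) from he]; rfl)
      · exact Or.inr (by
          show (Quot.mk (G.subgraph D).adj (G.ends e.1).1,
                Quot.mk (G.subgraph D).adj (G.ends e.1).2) = _
          rw [show G.ends e.1 = (w, v) from he]; rfl))

lemma gmap_hmap (h : D ⊆ S) : ∀ x, G.gmap D S h (G.hmap D S h x) = x := by
  intro x; induction x using Quot.ind; rfl

lemma hmap_gmap (h : D ⊆ S) : ∀ x, G.hmap D S h (G.gmap D S h x) = x := by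
  intro x
  induction x using Quot.ind with
  | _ q => induction q using Quot.ind; rfl

end Aux

/-- Covering subgraphs of `Γ` are identified with subsets of the internal edges; the
map `γ ↦ γ/δ` sends a covering subgraph containing `δ` (a set `S ⊇ D`) to the
corresponding set of edges of the contraction `Γ/δ`. -/
theorem contraction_bijection_and_transitivity (G : FinGraph) (D : Set G.E) :
    Function.Bijective
      (fun S : {S : Set G.E // D ⊆ S} =>
        ({e : ↥(Dᶜ) | (e : G.E) ∈ S.1} : Set (G.contract D).E)) ∧
    ∀ S : Set G.E, D ⊆ S →
      Nonempty (GraphIso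
        ((G.contract D).contract {e : ↥(Dᶜ) | (e : G.E) ∈ S})
        (G.contract S)) := by
  constructor
  · constructor
    · rintro ⟨S, hS⟩ ⟨S', hS'⟩ h
      simp only [Subtype.mk.injEq]
      ext e
      by_cases hD : e ∈ D
      · simp [hS hD, hS' hD]
      · have := Set.ext_iff.mp h ⟨e, hD⟩
        exact this
    · intro U
      refine ⟨⟨D ∪ {e | ∃ h : e ∈ Dᶜ, (⟨e, h⟩ : ↥(Dᶜ)) ∈ U}, Set.subset_union_left⟩, ?_⟩
      ext ⟨e, he⟩
      have hne : e ∉ D := he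
      constructor
      · rintro (h | ⟨h', hU⟩)
        · exact absurd h hne
        · exact hU
      · intro hU
        exact Or.inr ⟨he, hU⟩
  · intro S hDS
    refine ⟨⟨⟨G.gmap D S hDS, G.hmap D S hDS, G.hmap_gmap D S hDS, G.gmap_hmap D S hDS⟩,
      { toFun := fun e => ⟨(e.1 : ↥(Dᶜ)).1, e.2⟩
        invFun := fun e => ⟨(⟨e.1, fun hD => e.2 (hDS hD)⟩ : ↥(Dᶜ)), e.2⟩
        left_inv := fun e => rfl
        right_inv := fun e => rfl }, ?_⟩⟩
    intro e
    rfl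

end FinGraph
end
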